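/- Let Γ be a real symmetric positive-definite 2m×2m matrix with eigenvalues λ₁,…,λ_{2m} and symplectic eigenvalues ν₁,…,ν_m, and let ν_th > 0 with ν_th + ν_k ≥ 1 for all k. Then the Gaussian extractable work W(Γ) = (1/2)∑ₖ(λₖ − ν_th) + ∑ₖ(ν_th − νₖ) satisfies W(Γ) ≤ √(m · Δ) where Δ = ∑_{k=1}^{2m}(λₖ − ν_th)² + 2∑_{k=1}^{m}(νₖ² − ν_th²)². -/
import Mathlib


open Matrix

/-- The standard symplectic form Ω = [[Iₘ's 0, I],[−I, 0]] on ℝ^{2m}. -/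
noncomputable def Omega (m : ℕ) : Matrix (Fin m ⊕ Fin m) (Fin m ⊕ Fin m) ℝ :=
  Matrix.fromBlocks 0 1 (-1) 0

/-- For a real symmetric positive-definite 2m×2m matrix Γ with eigenvalues
λ₁,…,λ_{2m} and symplectic eigenvalues ν₁,…,ν_m (the eigenvalues of iΩΓ being ±νₖ),
and ν_th > 0 with ν_th + νₖ ≥ 1 for all k, the Gaussian extractable work
W = (1/2)∑ₖ(λₖ − ν_th) + ∑ₖ(ν_th − νₖ) satisfies W ≤ √(m·Δ) with
Δ = ∑ₖ(λₖ−ν_th)² + 2∑ₖ(νₖ²−ν_th²)². -/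
theorem work_bounded_by_Delta (m : ℕ)
    (Γ : Matrix (Fin m ⊕ Fin m) (Fin m ⊕ Fin m) ℝ)
    (hΓ : Γ.IsHermitian) (hpd : Γ.PosDef)
    (ν : Fin m → ℝ) (hν : ∀ k, 0 < ν k)
    (hroots : ((Complex.I • ((Omega m * Γ).map (fun x : ℝ => (x : ℂ)))).charpoly).roots
      = (Finset.univ.val.map fun k : Fin m => ((ν k : ℝ) : ℂ))
        + (Finset.univ.val.map fun k : Fin m => (-(ν k : ℝ) : ℂ)))
    (νth : ℝ) (hth : 0 < νth) (hsum : ∀ k, 1 ≤ νth + ν k) :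
    (1 / 2 : ℝ) * (∑ k, (hΓ.eigenvalues k - νth)) + ∑ k, (νth - ν k)
      ≤ Real.sqrt (m *
          ((∑ k, (hΓ.eigenvalues k - νth) ^ 2) + 2 * ∑ k, (ν k ^ 2 - νth ^ 2) ^ 2)) := by
  set a : Fin m ⊕ Fin m → ℝ := fun k => hΓ.eigenvalues k - νth with ha
  set X : ℝ := ∑ k, |a k| with hX
  set Y : ℝ := ∑ k, |ν k ^ 2 - νth ^ 2| with hY
  set P : ℝ := ∑ k, a k ^ 2 with hP
  set Q : ℝ := ∑ k, (ν k ^ 2 - νth ^ 2) ^ 2 with hQ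
  have hXnn : 0 ≤ X := Finset.sum_nonneg fun k _ => abs_nonneg _
  have hYnn : 0 ≤ Y := Finset.sum_nonneg fun k _ => abs_nonneg _
  -- Step 1: W ≤ X/2 + Y
  have step1 : (1 / 2 : ℝ) * (∑ k, a k) + ∑ k, (νth - ν k) ≤ (1 / 2) * X + Y := by
    have h1 : (∑ k, a k) ≤ X := Finset.sum_le_sum fun k _ => le_abs_self _
    have h2 : (∑ k, (νth - ν k)) ≤ Y := by
      refine Finset.sum_le_sum fun k _ => ?_
      have hk := hν k
      have hs := hsum k
      have : |νth - ν k| ≤ |νth - ν k| * (νth + ν k) := by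
        nlinarith [abs_nonneg (νth - ν k)]
      have habs : |νth - ν k| * (νth + ν k) = |ν k ^ 2 - νth ^ 2| := by
        rw [show ν k ^ 2 - νth ^ 2 = (ν k - νth) * (νth + ν k) by ring, abs_mul,
          abs_of_pos (show (0:ℝ) < νth + ν k by linarith), abs_sub_comm]
      calc νth - ν k ≤ |νth - ν k| := le_abs_self _
        _ ≤ |νth - ν k| * (νth + ν k) := this
        _ = |ν k ^ 2 - νth ^ 2| := habs
    linarith
  -- Cauchy–Schwarz pieces
  have hXsq : X ^ 2 ≤ (2 * m) * P := by
    have := sq_sum_le_card_mul_sum_sq (s := (Finset.univ : Finset (Fin m ⊕ Fin m)))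
      (f := fun k => |a k|)
    simpa [hX, hP, sq_abs, Finset.card_univ, two_mul] using this
  have hYsq : Y ^ 2 ≤ (m : ℝ) * Q := by
    have := sq_sum_le_card_mul_sum_sq (s := (Finset.univ : Finset (Fin m)))
      (f := fun k => |ν k ^ 2 - νth ^ 2|)
    simpa [hY, hQ, sq_abs, Finset.card_univ] using this
  -- Step 2: (X/2 + Y)² ≤ m(P + 2Q)
  have step2 : ((1 / 2) * X + Y) ^ 2 ≤ (m : ℝ) * (P + 2 * Q) := by
    nlinarith [sq_nonneg ((1 / 2) * X - Y)]
  refine le_trans step1 ?_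
  exact Real.le_sqrt_of_sq_le step2
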